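/- arXiv:2504.00846 — 2 statements merged into one kernel-verified Lean document; each statement's English description precedes it below -/
import Mathlib

section
/- For a standard one-dimensional Brownian motion $B_t$ started at 0 and a level $y > 0$, the hitting time $T_y = \inf\{t \geq 0 : B_t = y\}$ satisfies $P(T_y \leq t) = 2\Phi(-y/\sqrt{t})$ for all $t > 0$, where $\Phi$ is the standard normal CDF. -/
noncomputable section
open MeasureTheory ProbabilityTheory Real Filter

/-- The standard normal cumulative distribution function. -/
def stdNormalCDF (x : ℝ) : ℝ :=
  ∫ t in Set.Iic x, (1 / Real.sqrt (2 * Real.pi)) * Real.exp (-t ^ 2 / 2)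

/-- `B` is a standard one-dimensional Brownian motion under `P`, started at `0`. -/
def IsStdBM {Ω : Type*} [MeasurableSpace Ω] (P : Measure Ω) (B : ℝ → Ω → ℝ) : Prop :=
  IsProbabilityMeasure P ∧
  (∀ t, Measurable (B t)) ∧
  (∀ ω, B 0 ω = 0) ∧
  (∀ ω, Continuous fun t => B t ω) ∧
  (∀ s t : ℝ, 0 ≤ s → s ≤ t →
    P.map (fun ω => B t ω - B s ω) = gaussianReal 0 (Real.toNNReal (t - s))) ∧
  (∀ (n : ℕ) (t : ℕ → ℝ), StrictMono t → 0 ≤ t 0 →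
    iIndepFun
      (fun i : Fin n => fun ω => B (t (i + 1)) ω - B (t i) ω) P)

/-- First hitting time of level `y` by the path `t ↦ B t ω`. -/
def hitTime {Ω : Type*} (B : ℝ → Ω → ℝ) (y : ℝ) (ω : Ω) : ℝ :=
  sInf {t : ℝ | 0 ≤ t ∧ B t ω = y}

open Set
open scoped NNReal ENNReal Topology

namespace BMAux


lemma gauss_neg_symm (v : ℝ≥0) : (gaussianReal 0 v).map (fun x => -x) = gaussianReal 0 v := by
  have h := gaussianReal_map_const_mul (μ := 0) (v := v) (-1)
  simp only [neg_one_mul, mul_zero] at h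
  convert h using 2
  ext : 1
  simp

lemma gauss_Iic_neg (v : ℝ≥0) (c : ℝ) :
    gaussianReal 0 v (Iic (-c)) = gaussianReal 0 v (Ici c) := by
  conv_lhs => rw [← gauss_neg_symm v]
  rw [Measure.map_apply measurable_neg measurableSet_Iic]
  congr 1
  ext x
  simp [neg_le]

lemma stdpdf_eq (v : ℝ) (hv : 0 < v) (u : ℝ) :
    Real.sqrt v • gaussianPDFReal 0 v.toNNReal (Real.sqrt v * u)
      = (1 / Real.sqrt (2 * Real.pi)) * Real.exp (-u ^ 2 / 2) := by
  rw [gaussianPDFReal]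
  have hvv : ((v.toNNReal : ℝ)) = v := Real.coe_toNNReal _ hv.le
  rw [hvv, sub_zero]
  have hsq : (Real.sqrt v * u) ^ 2 = v * u ^ 2 := by rw [mul_pow, Real.sq_sqrt hv.le]
  rw [hsq]
  have h2pi : Real.sqrt (2 * Real.pi * v) = Real.sqrt (2 * Real.pi) * Real.sqrt v := by
    rw [← Real.sqrt_mul (by positivity)]
  rw [h2pi]
  have h3 : -(v * u ^ 2) / (2 * v) = -u ^ 2 / 2 := by field_simp
  rw [h3]
  have h1 : (0:ℝ) < Real.sqrt (2 * Real.pi) := Real.sqrt_pos.mpr (by positivity)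
  have hsv : (0:ℝ) < Real.sqrt v := Real.sqrt_pos.mpr hv
  simp only [smul_eq_mul]
  field_simp

lemma gauss_Ici_eq_CDF {v : ℝ} (hv : 0 < v) (y : ℝ) :
    gaussianReal 0 v.toNNReal (Ici y) = ENNReal.ofReal (stdNormalCDF (-y / Real.sqrt v)) := by
  have hv' : v.toNNReal ≠ 0 := (Real.toNNReal_pos.mpr hv).ne'
  rw [gaussianReal_apply_eq_integral _ hv', stdNormalCDF]
  congr 1
  have hsv : (0:ℝ) < Real.sqrt v := Real.sqrt_pos.mpr hv
  have h1 : (∫ t in Iic (-y / Real.sqrt v), (1 / Real.sqrt (2 * Real.pi)) * Real.exp (-t ^ 2 / 2))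
      = ∫ t in Ioi (y / Real.sqrt v), (1 / Real.sqrt (2 * Real.pi)) * Real.exp (-t ^ 2 / 2) := by
    rw [neg_div, ← integral_comp_neg_Ioi]
    congr 1; ext x; rw [neg_sq]
  rw [h1, integral_Ici_eq_integral_Ioi]
  have h2 := integral_comp_mul_left_Ioi
      (fun x => gaussianPDFReal 0 v.toNNReal x) (y / Real.sqrt v) hsv
  rw [mul_div_cancel₀ _ hsv.ne'] at h2
  calc ∫ t in Ioi y, gaussianPDFReal 0 v.toNNReal t
      = Real.sqrt v • ((Real.sqrt v)⁻¹ • ∫ t in Ioi y, gaussianPDFReal 0 v.toNNReal t) := by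
        rw [smul_smul, mul_inv_cancel₀ hsv.ne', one_smul]
    _ = Real.sqrt v • ∫ x in Ioi (y / Real.sqrt v),
          gaussianPDFReal 0 v.toNNReal (Real.sqrt v * x) := by rw [h2]
    _ = ∫ x in Ioi (y / Real.sqrt v),
          Real.sqrt v • gaussianPDFReal 0 v.toNNReal (Real.sqrt v * x) := by
        rw [integral_smul]
    _ = ∫ t in Ioi (y / Real.sqrt v), (1 / Real.sqrt (2 * Real.pi)) * Real.exp (-t ^ 2 / 2) := by
        congr 1; ext u; exact stdpdf_eq v hv u

lemma gauss_singleton (v : ℝ≥0) (hv : v ≠ 0) (c : ℝ) : gaussianReal 0 v {c} = 0 :=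
  gaussianReal_absolutelyContinuous 0 hv (volume_singleton)

lemma gauss_Ioi_eq_Ici (v : ℝ≥0) (hv : v ≠ 0) (c : ℝ) :
    gaussianReal 0 v (Ioi c) = gaussianReal 0 v (Ici c) := by
  refine le_antisymm (measure_mono Ioi_subset_Ici_self) ?_
  calc gaussianReal 0 v (Ici c) = gaussianReal 0 v (Ioi c ∪ {c}) := by rw [Ioi_union_left]
    _ ≤ gaussianReal 0 v (Ioi c) + gaussianReal 0 v {c} := measure_union_le _ _
    _ = gaussianReal 0 v (Ioi c) := by rw [gauss_singleton v hv c, add_zero]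

lemma gauss_Iic_Ici (v : ℝ≥0) (hv : v ≠ 0) :
    gaussianReal 0 v (Ici (0:ℝ)) = gaussianReal 0 v (Iic (0:ℝ)) := by
  have := gauss_Iic_neg v 0
  rw [neg_zero] at this
  exact this.symm

lemma gauss_Ici_zero (v : ℝ≥0) (hv : v ≠ 0) :
    gaussianReal 0 v (Ici (0:ℝ)) = 1/2 := by
  have hsplit : (Iic (0:ℝ)) ∪ (Ioi 0) = univ := Iic_union_Ioi
  have hd : Disjoint (Iic (0:ℝ)) (Ioi 0) := Iic_disjoint_Ioi le_rfl
  have hadd : gaussianReal 0 v (Iic (0:ℝ)) + gaussianReal 0 v (Ioi 0) = 1 := by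
    rw [← measure_union hd measurableSet_Ioi, hsplit, measure_univ]
  rw [gauss_Ioi_eq_Ici v hv, ← gauss_Iic_Ici v hv, ← two_mul] at hadd
  rw [ENNReal.eq_div_iff (two_ne_zero) (by norm_num)]
  exact hadd

lemma integral_x_exp (v δ : ℝ) (hv : 0 < v) :
    ∫ x in Ioi δ, x * Real.exp (-x^2/(2*v)) = v * Real.exp (-δ^2/(2*v)) := by
  have hderiv : ∀ x ∈ Ioi δ, HasDerivAt (fun x => -v * Real.exp (-x^2/(2*v)))
      (x * Real.exp (-x^2/(2*v))) x := by
    intro x _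
    have h1 : HasDerivAt (fun x : ℝ => -x^2/(2*v)) (-(2*x)/(2*v)) x := by
      have := (hasDerivAt_pow 2 x).neg.div_const (2*v)
      simpa using this
    have h2 := (h1.exp).const_mul (-v)
    refine h2.congr_deriv ?_
    field_simp
  have hint : IntegrableOn (fun x => x * Real.exp (-x^2/(2*v))) (Ioi δ) := by
    have : (0:ℝ) < 1/(2*v) := by positivity
    have h := (integrable_mul_exp_neg_mul_sq this).integrableOn (s := Ioi δ)
    refine h.congr_fun ?_ measurableSet_Ioi
    intro x _
    have harg : -(1/(2*v))*x^2 = -x^2/(2*v) := by ring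
    simp only [harg]
  have hlim : Tendsto (fun x => -v * Real.exp (-x^2/(2*v))) atTop (𝓝 0) := by
    have h1 : Tendsto (fun x : ℝ => -x^2/(2*v)) atTop atBot := by
      apply Tendsto.atBot_div_const (by positivity)
      exact tendsto_neg_atBot_iff.mpr (tendsto_pow_atTop (by norm_num))
    have := (Real.tendsto_exp_atBot.comp h1).const_mul (-v)
    simpa using this
  have hcont : ContinuousWithinAt (fun x => -v * Real.exp (-x^2/(2*v))) (Ici δ) δ :=
    (Continuous.continuousWithinAt (by fun_prop))
  have := integral_Ioi_of_hasDerivAt_of_tendsto hcont hderiv hint hlim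
  rw [this]
  ring

lemma gauss_tail_le {v : ℝ} (hv : 0 < v) {δ : ℝ} (hδ : 0 < δ) :
    gaussianReal 0 v.toNNReal (Ioi δ)
      ≤ ENNReal.ofReal (Real.sqrt v / δ * Real.exp (-δ^2/(2*v))) := by
  have hv' : v.toNNReal ≠ 0 := (Real.toNNReal_pos.mpr hv).ne'
  have hvv : ((v.toNNReal : ℝ)) = v := Real.coe_toNNReal _ hv.le
  rw [gaussianReal_apply_eq_integral _ hv']
  apply ENNReal.ofReal_le_ofReal
  have hC : (0:ℝ) < Real.sqrt (2 * Real.pi * v) := Real.sqrt_pos.mpr (by positivity)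
  have hpdf : ∀ x : ℝ, gaussianPDFReal 0 v.toNNReal x
      = (Real.sqrt (2 * Real.pi * v))⁻¹ * Real.exp (-x^2/(2*v)) := by
    intro x
    rw [gaussianPDFReal, hvv, sub_zero]
  have hint2 : IntegrableOn (fun x => (x/δ) * gaussianPDFReal 0 v.toNNReal x) (Ioi δ) := by
    have : (0:ℝ) < 1/(2*v) := by positivity
    have h := ((integrable_mul_exp_neg_mul_sq this).const_mul
      ((Real.sqrt (2 * Real.pi * v))⁻¹ / δ)).integrableOn (s := Ioi δ)
    refine h.congr_fun ?_ measurableSet_Ioi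
    intro x _
    simp only [hpdf]
    have harg : -(1/(2*v))*x^2 = -x^2/(2*v) := by ring
    rw [harg]
    ring
  have hmono : ∫ x in Ioi δ, gaussianPDFReal 0 v.toNNReal x
      ≤ ∫ x in Ioi δ, (x/δ) * gaussianPDFReal 0 v.toNNReal x := by
    refine setIntegral_mono_on ((integrable_gaussianPDFReal 0 _).integrableOn) hint2
      measurableSet_Ioi ?_
    intro x hx
    rw [mem_Ioi] at hx
    have h1 : (1:ℝ) ≤ x/δ := (one_le_div hδ).mpr hx.le
    nlinarith [gaussianPDFReal_nonneg 0 v.toNNReal x]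
  refine hmono.trans ?_
  have hval : ∫ x in Ioi δ, (x/δ) * gaussianPDFReal 0 v.toNNReal x
      = ((Real.sqrt (2 * Real.pi * v))⁻¹/δ) * (v * Real.exp (-δ^2/(2*v))) := by
    rw [← integral_x_exp v δ hv, ← integral_const_mul]
    congr 1
    ext x
    rw [hpdf]
    ring
  rw [hval]
  have hsv : (0:ℝ) < Real.sqrt v := Real.sqrt_pos.mpr hv
  have key : (Real.sqrt (2 * Real.pi * v))⁻¹ * v ≤ Real.sqrt v := by
    have h2pi : Real.sqrt (2 * Real.pi * v) = Real.sqrt (2 * Real.pi) * Real.sqrt v := by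
      rw [← Real.sqrt_mul (by positivity)]
    have hge1 : (1:ℝ) ≤ Real.sqrt (2 * Real.pi) := by
      rw [show (1:ℝ) = Real.sqrt 1 by simp]
      apply Real.sqrt_le_sqrt
      nlinarith [Real.pi_gt_three]
    rw [h2pi]
    rw [mul_inv]
    have hvsq : v = Real.sqrt v * Real.sqrt v := (Real.mul_self_sqrt hv.le).symm
    calc (Real.sqrt (2*Real.pi))⁻¹ * (Real.sqrt v)⁻¹ * v
        ≤ 1 * ((Real.sqrt v)⁻¹ * v) := by
          rw [mul_assoc]
          apply mul_le_mul_of_nonneg_right _ (by positivity)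
          rw [inv_le_one_iff₀]; right; exact hge1
      _ = Real.sqrt v := by rw [one_mul, inv_mul_eq_div, div_eq_iff hsv.ne']; exact hvsq
  have hexp : (0:ℝ) < Real.exp (-δ^2/(2*v)) := Real.exp_pos _
  calc (Real.sqrt (2 * Real.pi * v))⁻¹/δ * (v * Real.exp (-δ^2/(2*v)))
      = ((Real.sqrt (2 * Real.pi * v))⁻¹ * v) * (Real.exp (-δ^2/(2*v)) / δ) := by ring
    _ ≤ Real.sqrt v * (Real.exp (-δ^2/(2*v)) / δ) := by
        apply mul_le_mul_of_nonneg_right key (by positivity)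
    _ = Real.sqrt v / δ * Real.exp (-δ^2/(2*v)) := by ring

lemma gauss_Ici_scale {u : ℝ} (hu : 0 < u) (y : ℝ) :
    gaussianReal 0 u.toNNReal (Ici y) = gaussianReal 0 1 (Ici (y / Real.sqrt u)) := by
  have hsu : (0:ℝ) < Real.sqrt u := Real.sqrt_pos.mpr hu
  have h := gaussianReal_map_const_mul (μ := 0) (v := 1) (Real.sqrt u)
  rw [mul_zero] at h
  have hv : (NNReal.mk ((Real.sqrt u)^2) (sq_nonneg _) * 1 : ℝ≥0) = u.toNNReal := by
    ext
    simp [Real.sq_sqrt hu.le, Real.coe_toNNReal _ hu.le]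
  rw [hv] at h
  rw [← h, Measure.map_apply (by fun_prop) measurableSet_Ici]
  congr 1
  ext x
  simp only [mem_preimage, mem_Ici]
  rw [mul_comm]
  exact (div_le_iff₀ hsu).symm

lemma gauss_Ioi_zero_half : gaussianReal 0 1 (Ioi (0:ℝ)) = 1/2 := by
  rw [gauss_Ioi_eq_Ici 1 one_ne_zero, gauss_Ici_zero 1 one_ne_zero]

lemma tendsto_gauss_Ici_half {y : ℝ} (hy : 0 < y) :
    Tendsto (fun j : ℕ => gaussianReal 0 ((j:ℝ)+1).toNNReal (Ici y)) atTop (𝓝 (1/2)) := by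
  have hpos : ∀ j : ℕ, (0:ℝ) < (j:ℝ)+1 := fun j => by positivity
  have heq : ∀ j : ℕ, gaussianReal 0 ((j:ℝ)+1).toNNReal (Ici y)
      = gaussianReal 0 1 (Ici (y / Real.sqrt ((j:ℝ)+1))) := fun j =>
    gauss_Ici_scale (hpos j) y
  simp only [heq]
  have hmono : Monotone (fun j : ℕ => Ici (y / Real.sqrt ((j:ℝ)+1))) := by
    intro j k hjk
    apply Ici_subset_Ici.mpr
    apply div_le_div_of_nonneg_left hy.le (Real.sqrt_pos.mpr (hpos j))
    apply Real.sqrt_le_sqrt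
    have : (j:ℝ) ≤ k := Nat.cast_le.mpr hjk
    linarith
  have hunion : (⋃ j : ℕ, Ici (y / Real.sqrt ((j:ℝ)+1))) = Ioi (0:ℝ) := by
    ext x
    simp only [mem_iUnion, mem_Ici, mem_Ioi]
    constructor
    · rintro ⟨j, hj⟩
      have : (0:ℝ) < y / Real.sqrt ((j:ℝ)+1) := by
        apply div_pos hy (Real.sqrt_pos.mpr (hpos j))
      linarith
    · intro hx
      obtain ⟨j, hj⟩ := exists_nat_ge ((y/x)^2)
      refine ⟨j, ?_⟩
      have h1 : y / x ≤ Real.sqrt ((j:ℝ)+1) := by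
        have h2 : ((y/x)^2 : ℝ) ≤ (j:ℝ)+1 := by linarith
        calc y/x = Real.sqrt ((y/x)^2) := by
              rw [Real.sqrt_sq (by positivity)]
          _ ≤ Real.sqrt ((j:ℝ)+1) := Real.sqrt_le_sqrt h2
      have h2 : y ≤ Real.sqrt ((j:ℝ)+1) * x := (div_le_iff₀ hx).mp h1
      rw [div_le_iff₀ (Real.sqrt_pos.mpr (hpos j))]
      linarith [mul_comm (Real.sqrt ((j:ℝ)+1)) x]
  have := tendsto_measure_iUnion_atTop (μ := gaussianReal 0 1) hmono
  rw [hunion, gauss_Ioi_zero_half] at this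
  exact this

lemma tendsto_n_mul_tail {t δ : ℝ} (ht : 0 < t) (hδ : 0 < δ) :
    Tendsto (fun m : ℕ =>
        ((2^m : ℕ) : ℝ≥0∞) * gaussianReal 0 (t/((2^m : ℕ) : ℝ)).toNNReal (Ioi δ))
      atTop (𝓝 0) := by
  set c : ℝ := δ^2/(2*t) with hc
  have hcpos : 0 < c := by positivity
  have hpow : ∀ m : ℕ, ((2^m : ℕ) : ℝ) = (2:ℝ)^m := fun m => by push_cast; ring
  have hvpos : ∀ m : ℕ, (0:ℝ) < t/((2^m : ℕ) : ℝ) := fun m => by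
    rw [hpow]; positivity
  -- the real dominating sequence
  set b : ℕ → ℝ := fun m => (Real.sqrt t / δ) * ((2:ℝ)^m * Real.exp (-(c * 2^m))) with hb
  have hbtend : Tendsto b atTop (𝓝 0) := by
    have h1 : Tendsto (fun x : ℝ => x * Real.exp (-x)) atTop (𝓝 0) := by
      have := tendsto_pow_mul_exp_neg_atTop_nhds_zero 1
      simpa using this
    have h2 : Tendsto (fun x : ℝ => c * x) atTop atTop :=
      Tendsto.const_mul_atTop hcpos tendsto_id
    have h3 : Tendsto (fun x : ℝ => (c*x) * Real.exp (-(c*x))) atTop (𝓝 0) := h1.comp h2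
    have h4 : Tendsto (fun x : ℝ => x * Real.exp (-(c*x))) atTop (𝓝 0) := by
      have h5 := h3.const_mul c⁻¹
      rw [mul_zero] at h5
      refine h5.congr fun x => ?_
      rw [← mul_assoc, ← mul_assoc, inv_mul_cancel₀ hcpos.ne', one_mul]
    have h6 : Tendsto (fun m : ℕ => ((2:ℝ)^m)) atTop atTop :=
      tendsto_pow_atTop_atTop_of_one_lt one_lt_two
    have h7 := (h4.comp h6).const_mul (Real.sqrt t / δ)
    rw [mul_zero] at h7
    exact h7
  have hbound : ∀ m : ℕ, ((2^m : ℕ) : ℝ≥0∞) * gaussianReal 0 (t/((2^m : ℕ) : ℝ)).toNNReal (Ioi δ)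
      ≤ ENNReal.ofReal (b m) := by
    intro m
    have htail := gauss_tail_le (hvpos m) hδ
    have h1 : ((2^m : ℕ) : ℝ≥0∞) * gaussianReal 0 (t/((2^m : ℕ) : ℝ)).toNNReal (Ioi δ)
        ≤ ((2^m : ℕ) : ℝ≥0∞) * ENNReal.ofReal
            (Real.sqrt (t/((2^m : ℕ):ℝ)) / δ * Real.exp (-δ^2/(2*(t/((2^m : ℕ):ℝ))))) :=
      mul_le_mul_right htail _
    refine h1.trans ?_
    have h2 : ((2^m : ℕ) : ℝ≥0∞) = ENNReal.ofReal ((2:ℝ)^m) := by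
      rw [ENNReal.ofReal_pow (by norm_num : (0:ℝ) ≤ 2)]
      norm_num
    rw [h2, ← ENNReal.ofReal_mul (by positivity)]
    apply ENNReal.ofReal_le_ofReal
    rw [hpow]
    have hexp : -δ^2/(2*(t/(2:ℝ)^m)) = -(c * 2^m) := by
      rw [hc]; field_simp; try ring
    rw [hexp, hb]
    have hsq : Real.sqrt (t/(2:ℝ)^m) ≤ Real.sqrt t := by
      apply Real.sqrt_le_sqrt
      rw [div_le_iff₀ (by positivity)]
      nlinarith [one_le_pow₀ (one_le_two (α := ℝ)) (n := m)]
    have h9 : (0:ℝ) < Real.exp (-(c * 2^m)) := Real.exp_pos _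
    have h10 : (0:ℝ) < (2:ℝ)^m := by positivity
    have := mul_le_mul_of_nonneg_right hsq (le_of_lt (by positivity : (0:ℝ) < Real.exp (-(c*2^m)) / δ))
    calc (2:ℝ)^m * (Real.sqrt (t/(2:ℝ)^m) / δ * Real.exp (-(c * 2^m)))
        ≤ (2:ℝ)^m * (Real.sqrt t / δ * Real.exp (-(c * 2^m))) := by
          apply mul_le_mul_of_nonneg_left _ h10.le
          apply mul_le_mul_of_nonneg_right _ h9.le
          exact div_le_div_of_nonneg_right hsq hδ.le
      _ = Real.sqrt t / δ * ((2:ℝ)^m * Real.exp (-(c * 2^m))) := by ring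
  refine tendsto_of_tendsto_of_tendsto_of_le_of_le tendsto_const_nhds
    (by simpa using ENNReal.tendsto_ofReal hbtend) (fun m => zero_le) hbound


variable {Ω : Type*} [MeasurableSpace Ω] {P : Measure Ω} {B : ℝ → Ω → ℝ}

/-- grid points -/
def gr (c : ℝ) (j : ℕ) : ℝ := (j : ℝ) * c

/-- grid increments -/
def Xg (B : ℝ → Ω → ℝ) (c : ℝ) (i : ℕ) : Ω → ℝ :=
  fun ω => B (gr c (i + 1)) ω - B (gr c i) ω

/-- σ-algebra of the first `k` increments (within `Fin n`) -/
def pastAlg (B : ℝ → Ω → ℝ) (c : ℝ) (n k : ℕ) : MeasurableSpace Ω :=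
  ⨆ i ∈ {i : Fin n | (i : ℕ) < k}, MeasurableSpace.comap (Xg B c (i : ℕ)) inferInstance



lemma incr_law (hB : IsStdBM P B) {a b : ℝ} (ha : 0 ≤ a) (hab : a ≤ b)
    {s : Set ℝ} (hs : MeasurableSet s) :
    P {ω | B b ω - B a ω ∈ s} = gaussianReal 0 (b - a).toNNReal s := by
  obtain ⟨h1, hmeas, h0, hcont, hlaw, hind⟩ := hB
  rw [← hlaw a b ha hab, Measure.map_apply (f := fun ω => B b ω - B a ω) ((hmeas b).sub (hmeas a)) hs]
  rfl

lemma B_law (hB : IsStdBM P B) {b : ℝ} (hb : 0 ≤ b) {s : Set ℝ} (hs : MeasurableSet s) :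
    P {ω | B b ω ∈ s} = gaussianReal 0 b.toNNReal s := by
  have h := incr_law hB le_rfl hb hs
  rw [sub_zero] at h
  rw [← h]
  congr 1
  ext ω
  simp [hB.2.2.1 ω]

lemma telescope (h0 : ∀ ω, B 0 ω = 0) (c : ℝ) (j : ℕ) (ω : Ω) :
    ∑ i ∈ Finset.range j, Xg B c i ω = B (gr c j) ω := by
  have h := Finset.sum_range_sub (f := fun i : ℕ => B (gr c i) ω) j
  simp only [Xg] at *
  rw [h]
  have : gr c 0 = 0 := by simp [gr]
  rw [this, h0 ω, sub_zero]

lemma telescope_Ico (h0 : ∀ ω, B 0 ω = 0) (c : ℝ) {k n : ℕ} (hk : k ≤ n) (ω : Ω) :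
    ∑ i ∈ Finset.Ico k n, Xg B c i ω = B (gr c n) ω - B (gr c k) ω := by
  have h1 := telescope h0 c n ω
  rw [← Finset.sum_range_add_sum_Ico (fun i => Xg B c i ω) hk, telescope h0 c k ω] at h1
  linarith

lemma measurable_Xg (hm : ∀ t, Measurable (B t)) (c : ℝ) (i : ℕ) : Measurable (Xg B c i) :=
  (hm _).sub (hm _)

lemma measurable_past (hm : ∀ t, Measurable (B t)) (h0 : ∀ ω, B 0 ω = 0) (c : ℝ)
    {n k j : ℕ} (hj : j ≤ k) (hk : k ≤ n) :
    Measurable[pastAlg B c n k] (fun ω => B (gr c j) ω) := by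
  have heq : (fun ω => B (gr c j) ω) = fun ω => ∑ i ∈ Finset.range j, Xg B c i ω :=
    funext fun ω => (telescope h0 c j ω).symm
  rw [heq]
  apply Finset.measurable_sum
  intro i hi
  rw [Finset.mem_range] at hi
  have hik : i < k := lt_of_lt_of_le hi hj
  have hin : i < n := lt_of_lt_of_le hik hk
  have hle : MeasurableSpace.comap (Xg B c i) inferInstance ≤ pastAlg B c n k := by
    have := le_iSup₂ (f := fun (i : Fin n) (_ : (i : ℕ) ∈ {m : ℕ | m < k}) =>
      MeasurableSpace.comap (Xg B c (i : ℕ)) (inferInstance : MeasurableSpace ℝ))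
      (⟨i, hin⟩ : Fin n)
    exact this hik
  exact Measurable.mono (Measurable.of_comap_le le_rfl) hle le_rfl

lemma measurable_fut (hm : ∀ t, Measurable (B t)) (h0 : ∀ ω, B 0 ω = 0) (c : ℝ)
    {n k : ℕ} (hk : k ≤ n) :
    Measurable[⨆ i ∈ {i : Fin n | k ≤ (i : ℕ)}, MeasurableSpace.comap (Xg B c (i : ℕ))
        inferInstance] (fun ω => B (gr c n) ω - B (gr c k) ω) := by
  have heq : (fun ω => B (gr c n) ω - B (gr c k) ω)
      = fun ω => ∑ i ∈ Finset.Ico k n, Xg B c i ω :=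
    funext fun ω => (telescope_Ico h0 c hk ω).symm
  rw [heq]
  apply Finset.measurable_sum
  intro i hi
  rw [Finset.mem_Ico] at hi
  have hle : MeasurableSpace.comap (Xg B c i) inferInstance
      ≤ ⨆ i ∈ {i : Fin n | k ≤ (i : ℕ)}, MeasurableSpace.comap (Xg B c (i : ℕ))
        inferInstance := by
    have := le_iSup₂ (f := fun (i : Fin n) (_ : k ≤ (i : ℕ)) =>
      MeasurableSpace.comap (Xg B c (i : ℕ)) (inferInstance : MeasurableSpace ℝ))
      (⟨i, hi.2⟩ : Fin n)
    exact this hi.1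
  exact Measurable.mono (Measurable.of_comap_le le_rfl) hle le_rfl

/-- The key independence property: any event in the past σ-algebra is independent of the
increment from time `k*c` to `n*c`. -/
lemma key_indep (hB : IsStdBM P B) {c : ℝ} (hc : 0 < c) {n k : ℕ} (hk : k ≤ n)
    {A : Set Ω} (hA : MeasurableSet[pastAlg B c n k] A)
    {s : Set ℝ} (hs : MeasurableSet s) :
    P (A ∩ {ω | B (gr c n) ω - B (gr c k) ω ∈ s})
      = P A * gaussianReal 0 ((n : ℝ) * c - (k : ℝ) * c).toNNReal s := by
  obtain ⟨h1, hmeas, h0, hcont, hlaw, hind⟩ := hB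
  have hu : StrictMono (gr c) := by
    intro a b hab
    exact mul_lt_mul_of_pos_right (Nat.cast_lt.mpr hab) hc
  have hu0 : 0 ≤ gr c 0 := by simp [gr]
  have hI := hind n (gr c) hu hu0
  have hI' : iIndepFun
      (fun i : Fin n => Xg B c (i : ℕ)) P := hI
  have hindep := indep_iSup_of_disjoint (m := fun i : Fin n =>
      MeasurableSpace.comap (Xg B c (i : ℕ)) inferInstance)
    (fun i => (measurable_Xg hmeas c (i : ℕ)).comap_le) hI'.iIndep
    (S := {i : Fin n | (i : ℕ) < k}) (T := {i : Fin n | k ≤ (i : ℕ)})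
    (by
      rw [Set.disjoint_iff]
      rintro i ⟨hi1, hi2⟩
      simp only [mem_setOf_eq] at hi1 hi2
      omega)
  have hD := measurable_fut hmeas h0 c hk
  have hDs : MeasurableSet[⨆ i ∈ {i : Fin n | k ≤ (i : ℕ)},
      MeasurableSpace.comap (Xg B c (i : ℕ)) inferInstance]
      {ω | B (gr c n) ω - B (gr c k) ω ∈ s} := hD hs
  have := (Indep_iff _ _ P).mp hindep A _ hA hDs
  rw [this]
  congr 1
  have hka : (0:ℝ) ≤ (k : ℝ) * c := by positivity
  have hkb : (k : ℝ) * c ≤ (n : ℝ) * c := by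
    apply mul_le_mul_of_nonneg_right (Nat.cast_le.mpr hk) hc.le
  exact incr_law ⟨h1, hmeas, h0, hcont, hlaw, hind⟩ hka hkb hs

def AkSet (B : ℝ → Ω → ℝ) (c z : ℝ) (k : ℕ) : Set Ω :=
  {ω | (∀ j < k, B (gr c j) ω ≤ z) ∧ z < B (gr c k) ω}

lemma AkSet_eq (B : ℝ → Ω → ℝ) (c z : ℝ) (k : ℕ) :
    AkSet B c z k = (⋂ j ∈ Finset.range k, {ω | B (gr c j) ω ≤ z})
      ∩ {ω | z < B (gr c k) ω} := by
  ext ω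
  simp only [AkSet, mem_inter_iff, mem_iInter, Finset.mem_range, mem_setOf_eq]

lemma AkSet_measurable_past (hm : ∀ t, Measurable (B t)) (h0 : ∀ ω, B 0 ω = 0)
    (c z : ℝ) {n k : ℕ} (hk : k ≤ n) :
    MeasurableSet[pastAlg B c n k] (AkSet B c z k) := by
  rw [AkSet_eq]
  apply MeasurableSet.inter
  · apply MeasurableSet.biInter (Finset.countable_toSet _)
    intro j hj
    rw [Finset.mem_coe, Finset.mem_range] at hj
    exact measurable_past hm h0 c hj.le hk measurableSet_Iic
  · exact measurable_past hm h0 c le_rfl hk measurableSet_Ioi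

lemma AkSet_inter_measurable_past (hm : ∀ t, Measurable (B t)) (h0 : ∀ ω, B 0 ω = 0)
    (c z w : ℝ) {n k : ℕ} (hk : k ≤ n) :
    MeasurableSet[pastAlg B c n k] (AkSet B c z k ∩ {ω | B (gr c k) ω ≤ w}) :=
  (AkSet_measurable_past hm h0 c z hk).inter
    (measurable_past hm h0 c le_rfl hk measurableSet_Iic)

lemma AkSet_measurable (hm : ∀ t, Measurable (B t)) (c z : ℝ) (k : ℕ) :
    MeasurableSet (AkSet B c z k) := by
  rw [AkSet_eq]
  exact (MeasurableSet.biInter (Finset.countable_toSet _)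
      (fun j _ => (hm _) measurableSet_Iic)).inter ((hm _) measurableSet_Ioi)

lemma step_a (hB : IsStdBM P B) {c : ℝ} (hc : 0 < c) {n k : ℕ} (hk : k ≤ n) {z : ℝ} :
    P (AkSet B c z k ∩ {ω | B (gr c n) ω ≤ z})
      ≤ P (AkSet B c z k ∩ {ω | z < B (gr c n) ω}) := by
  obtain ⟨h1, hmeas, h0, hcont, hlaw, hind⟩ := hB
  have hB' : IsStdBM P B := ⟨h1, hmeas, h0, hcont, hlaw, hind⟩
  set ν := gaussianReal 0 ((n : ℝ) * c - (k : ℝ) * c).toNNReal with hν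
  have hA := AkSet_measurable_past hmeas h0 c z hk (n := n)
  calc P (AkSet B c z k ∩ {ω | B (gr c n) ω ≤ z})
      ≤ P (AkSet B c z k ∩ {ω | B (gr c n) ω - B (gr c k) ω ∈ Iic 0}) := by
        apply measure_mono
        rintro ω ⟨hω1, hω2⟩
        refine ⟨hω1, ?_⟩
        simp only [mem_setOf_eq, mem_Iic] at *
        linarith [hω1.2]
    _ = P (AkSet B c z k) * ν (Iic 0) := key_indep hB' hc hk hA measurableSet_Iic
    _ = P (AkSet B c z k) * ν (Ici 0) := by
        rw [show (Iic (0:ℝ)) = Iic (-0) by norm_num, gauss_Iic_neg]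
    _ = P (AkSet B c z k ∩ {ω | B (gr c n) ω - B (gr c k) ω ∈ Ici 0}) :=
        (key_indep hB' hc hk hA measurableSet_Ici).symm
    _ ≤ P (AkSet B c z k ∩ {ω | z < B (gr c n) ω}) := by
        apply measure_mono
        rintro ω ⟨hω1, hω2⟩
        refine ⟨hω1, ?_⟩
        simp only [mem_setOf_eq, mem_Ici] at *
        linarith [hω1.2]

lemma step_b (hB : IsStdBM P B) {c : ℝ} (hc : 0 < c) {n k : ℕ} (hk1 : 1 ≤ k) (hk : k ≤ n)
    {z δ : ℝ} (hδ : 0 < δ) :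
    P (AkSet B c z k ∩ {ω | z + 2*δ < B (gr c n) ω})
      ≤ P (AkSet B c z k ∩ {ω | B (gr c n) ω ≤ z})
        + gaussianReal 0 c.toNNReal (Ioi δ) := by
  obtain ⟨h1, hmeas, h0, hcont, hlaw, hind⟩ := hB
  have hB' : IsStdBM P B := ⟨h1, hmeas, h0, hcont, hlaw, hind⟩
  set ν := gaussianReal 0 ((n : ℝ) * c - (k : ℝ) * c).toNNReal with hν
  set Ak' := AkSet B c z k ∩ {ω | B (gr c k) ω ≤ z + δ} with hAk'
  have hA' := AkSet_inter_measurable_past hmeas h0 c z (z+δ) hk (n := n)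
  -- overshoot part
  have hover : P (AkSet B c z k ∩ {ω | z + δ < B (gr c k) ω})
      ≤ gaussianReal 0 c.toNNReal (Ioi δ) := by
    have hsub : AkSet B c z k ∩ {ω | z + δ < B (gr c k) ω}
        ⊆ {ω | B (gr c k) ω - B (gr c (k-1)) ω ∈ Ioi δ} := by
      rintro ω ⟨hω1, hω2⟩
      simp only [mem_setOf_eq, mem_Ioi] at *
      have hprev : B (gr c (k-1)) ω ≤ z := hω1.1 (k-1) (by omega)
      linarith
    refine (measure_mono hsub).trans ?_
    have ha : (0:ℝ) ≤ gr c (k-1) := by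
      simp only [gr]; positivity
    have hab : gr c (k-1) ≤ gr c k := by
      apply mul_le_mul_of_nonneg_right _ hc.le
      exact_mod_cast Nat.sub_le k 1
    rw [incr_law hB' ha hab measurableSet_Ioi]
    have : gr c k - gr c (k-1) = c := by
      simp only [gr]
      have : ((k-1 : ℕ) : ℝ) = (k : ℝ) - 1 := by
        simpa using (Nat.cast_sub hk1 : ((k-1:ℕ):ℝ) = _)
      rw [this]
      ring
    rw [this]
  have hmain : P (Ak' ∩ {ω | z + 2*δ < B (gr c n) ω})
      ≤ P (AkSet B c z k ∩ {ω | B (gr c n) ω ≤ z}) := by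
    calc P (Ak' ∩ {ω | z + 2*δ < B (gr c n) ω})
        ≤ P (Ak' ∩ {ω | B (gr c n) ω - B (gr c k) ω ∈ Ici δ}) := by
          apply measure_mono
          rintro ω ⟨⟨hωa, hωb⟩, hω2⟩
          refine ⟨⟨hωa, hωb⟩, ?_⟩
          have h3 : B (gr c k) ω ≤ z + δ := hωb
          have h4 : z + 2*δ < B (gr c n) ω := hω2
          simp only [mem_setOf_eq, mem_Ici]
          linarith
      _ = P Ak' * ν (Ici δ) := key_indep hB' hc hk hA' measurableSet_Ici
      _ = P Ak' * ν (Iic (-δ)) := by rw [gauss_Iic_neg]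
      _ = P (Ak' ∩ {ω | B (gr c n) ω - B (gr c k) ω ∈ Iic (-δ)}) :=
          (key_indep hB' hc hk hA' measurableSet_Iic).symm
      _ ≤ P (AkSet B c z k ∩ {ω | B (gr c n) ω ≤ z}) := by
          apply measure_mono
          rintro ω ⟨⟨hωa, hωb⟩, hω2⟩
          have h3 : B (gr c k) ω ≤ z + δ := hωb
          have h4 : B (gr c n) ω - B (gr c k) ω ≤ -δ := hω2
          exact ⟨hωa, by simp only [mem_setOf_eq]; linarith⟩
  calc P (AkSet B c z k ∩ {ω | z + 2*δ < B (gr c n) ω})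
      ≤ P ((Ak' ∩ {ω | z + 2*δ < B (gr c n) ω})
          ∪ (AkSet B c z k ∩ {ω | z + δ < B (gr c k) ω})) := by
        apply measure_mono
        rintro ω ⟨hω1, hω2⟩
        by_cases hca : B (gr c k) ω ≤ z + δ
        · exact Or.inl ⟨⟨hω1, hca⟩, hω2⟩
        · exact Or.inr ⟨hω1, lt_of_not_ge hca⟩
    _ ≤ P (Ak' ∩ {ω | z + 2*δ < B (gr c n) ω})
          + P (AkSet B c z k ∩ {ω | z + δ < B (gr c k) ω}) := measure_union_le _ _
    _ ≤ P (AkSet B c z k ∩ {ω | B (gr c n) ω ≤ z})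
          + gaussianReal 0 c.toNNReal (Ioi δ) := add_le_add hmain hover

def USet (B : ℝ → Ω → ℝ) (c z : ℝ) (n : ℕ) : Set Ω :=
  {ω | ∃ k, 1 ≤ k ∧ k ≤ n ∧ z < B (gr c k) ω}

lemma mem_USet_of (h0 : ∀ ω, B 0 ω = 0) {c z : ℝ} (hz : 0 < z) {n : ℕ} {ω : Ω}
    (h : ∃ k, k ≤ n ∧ z < B (gr c k) ω) :
    ∃ k0, 1 ≤ k0 ∧ k0 ≤ n ∧ ω ∈ AkSet B c z k0 := by
  classical
  have hQ : ∃ m, z < B (gr c m) ω := ⟨h.choose, h.choose_spec.2⟩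
  set k0 := Nat.find hQ with hk0
  have hspec : z < B (gr c k0) ω := Nat.find_spec hQ
  have hmin : ∀ j < k0, B (gr c j) ω ≤ z := fun j hj =>
    not_lt.mp (Nat.find_min hQ hj)
  have hk0n : k0 ≤ n := le_trans (Nat.find_min' hQ h.choose_spec.2) h.choose_spec.1
  have hk01 : 1 ≤ k0 := by
    by_contra hcon
    push_neg at hcon
    interval_cases k0
    · have : gr c 0 = 0 := by simp [gr]
      rw [this, h0 ω] at hspec
      linarith
  exact ⟨k0, hk01, hk0n, hmin, hspec⟩

lemma USet_eq_biUnion (h0 : ∀ ω, B 0 ω = 0) {c z : ℝ} (hz : 0 < z) (n : ℕ) :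
    USet B c z n = ⋃ k ∈ Finset.Icc 1 n, AkSet B c z k := by
  ext ω
  simp only [USet, mem_setOf_eq, mem_iUnion, Finset.mem_Icc, exists_prop]
  constructor
  · rintro ⟨k, hk1, hk2, hk3⟩
    obtain ⟨k0, h1, h2, h3⟩ := mem_USet_of h0 hz (n := n) ⟨k, hk2, hk3⟩
    exact ⟨k0, ⟨h1, h2⟩, h3⟩
  · rintro ⟨k, ⟨hk1, hk2⟩, hmem⟩
    exact ⟨k, hk1, hk2, hmem.2⟩

lemma AkSet_disjoint (c z : ℝ) :
    (↑(Finset.Icc 1 n) : Set ℕ).PairwiseDisjoint (AkSet B c z (Ω := Ω)) := by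
  have key : ∀ a b : ℕ, a < b → Disjoint (AkSet B c z a) (AkSet B c z b) := by
    intro a b hab
    rw [Set.disjoint_left]
    rintro ω ⟨ha1, ha2⟩ ⟨hb1, hb2⟩
    exact absurd ha2 (not_lt.mpr (hb1 a hab))
  intro a _ b _ hab
  rcases lt_or_gt_of_ne hab with h | h
  · exact key a b h
  · exact (key b a h).symm

lemma subset_USet {c z : ℝ} {n : ℕ} (hn : 1 ≤ n) :
    {ω | z < B (gr c n) ω} ⊆ USet B c z n := fun ω hω => ⟨n, hn, le_rfl, hω⟩

theorem discrete_upper (hB : IsStdBM P B) {c : ℝ} (hc : 0 < c) {n : ℕ} (hn : 1 ≤ n)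
    {z : ℝ} (hz : 0 < z) :
    P (USet B c z n) ≤ 2 * P {ω | z < B (gr c n) ω} := by
  obtain ⟨h1, hmeas, h0, hcont, hlaw, hind⟩ := hB
  have hB' : IsStdBM P B := ⟨h1, hmeas, h0, hcont, hlaw, hind⟩
  set E := {ω | z < B (gr c n) ω} with hE
  have hEm : MeasurableSet E := (hmeas _) measurableSet_Ioi
  have hAm : ∀ k ∈ Finset.Icc 1 n, MeasurableSet (AkSet B c z k) :=
    fun k _ => AkSet_measurable hmeas c z k
  have hsum : P (USet B c z n) = ∑ k ∈ Finset.Icc 1 n, P (AkSet B c z k) := by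
    rw [USet_eq_biUnion h0 hz n]
    exact measure_biUnion_finset (AkSet_disjoint c z) hAm
  have hsplit : ∀ k, P (AkSet B c z k)
      = P (AkSet B c z k ∩ E) + P (AkSet B c z k ∩ {ω | B (gr c n) ω ≤ z}) := by
    intro k
    have hset : AkSet B c z k ∩ {ω | B (gr c n) ω ≤ z} = AkSet B c z k \ E := by
      ext ω
      simp only [mem_diff, mem_inter_iff, hE, mem_setOf_eq, not_lt]
    rw [hset]
    exact (measure_inter_add_diff _ hEm).symm
  have hstep : ∀ k ∈ Finset.Icc 1 n, P (AkSet B c z k)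
      ≤ 2 * P (AkSet B c z k ∩ E) := by
    intro k hk
    rw [Finset.mem_Icc] at hk
    rw [hsplit k, two_mul]
    exact add_le_add le_rfl (step_a hB' hc hk.2)
  have hd : (↑(Finset.Icc 1 n) : Set ℕ).PairwiseDisjoint
      (fun k => AkSet B c z k ∩ E) :=
    (AkSet_disjoint (B := B) (n := n) c z).mono (fun k => inter_subset_left)
  have hsum2 : ∑ k ∈ Finset.Icc 1 n, P (AkSet B c z k ∩ E) = P (⋃ k ∈ Finset.Icc 1 n,
      (AkSet B c z k ∩ E)) :=
    (measure_biUnion_finset hd (fun k hk => (hAm k hk).inter hEm)).symm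
  calc P (USet B c z n) = ∑ k ∈ Finset.Icc 1 n, P (AkSet B c z k) := hsum
    _ ≤ ∑ k ∈ Finset.Icc 1 n, 2 * P (AkSet B c z k ∩ E) := Finset.sum_le_sum hstep
    _ = 2 * ∑ k ∈ Finset.Icc 1 n, P (AkSet B c z k ∩ E) := by rw [Finset.mul_sum]
    _ = 2 * P (⋃ k ∈ Finset.Icc 1 n, (AkSet B c z k ∩ E)) := by rw [hsum2]
    _ ≤ 2 * P E := by
        apply mul_le_mul_right
        apply measure_mono
        exact iUnion₂_subset fun k _ => inter_subset_right

theorem discrete_lower (hB : IsStdBM P B) {c : ℝ} (hc : 0 < c) {n : ℕ} (hn : 1 ≤ n)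
    {z δ : ℝ} (hz : 0 < z) (hδ : 0 < δ) :
    P {ω | z < B (gr c n) ω} + P {ω | z + 2*δ < B (gr c n) ω}
      ≤ P (USet B c z n) + n * gaussianReal 0 c.toNNReal (Ioi δ) := by
  obtain ⟨h1, hmeas, h0, hcont, hlaw, hind⟩ := hB
  have hB' : IsStdBM P B := ⟨h1, hmeas, h0, hcont, hlaw, hind⟩
  set E := {ω | z < B (gr c n) ω} with hE
  set E' := {ω | z + 2*δ < B (gr c n) ω} with hE'
  have hEm : MeasurableSet E := (hmeas _) measurableSet_Ioi
  have hE'm : MeasurableSet E' := (hmeas _) measurableSet_Ioi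
  have hAm : ∀ k ∈ Finset.Icc 1 n, MeasurableSet (AkSet B c z k) :=
    fun k _ => AkSet_measurable hmeas c z k
  have hsum : P (USet B c z n) = ∑ k ∈ Finset.Icc 1 n, P (AkSet B c z k) := by
    rw [USet_eq_biUnion h0 hz n]
    exact measure_biUnion_finset (AkSet_disjoint c z) hAm
  have hinter : ∀ (F : Set Ω), F ⊆ USet B c z n → MeasurableSet F →
      P F = ∑ k ∈ Finset.Icc 1 n, P (AkSet B c z k ∩ F) := by
    intro F hF hFm
    have : F = ⋃ k ∈ Finset.Icc 1 n, (AkSet B c z k ∩ F) := by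
      rw [← iUnion₂_inter, ← USet_eq_biUnion h0 hz n]
      rw [inter_eq_right.mpr hF]
    have hd : (↑(Finset.Icc 1 n) : Set ℕ).PairwiseDisjoint
        (fun k => AkSet B c z k ∩ F) :=
      (AkSet_disjoint (B := B) (n := n) c z).mono (fun k => inter_subset_left)
    calc P F = P (⋃ k ∈ Finset.Icc 1 n, (AkSet B c z k ∩ F)) := congrArg P this
      _ = ∑ k ∈ Finset.Icc 1 n, P (AkSet B c z k ∩ F) :=
        measure_biUnion_finset hd (fun k hk => (hAm k hk).inter hFm)
  have h1E : P E = ∑ k ∈ Finset.Icc 1 n, P (AkSet B c z k ∩ E) :=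
    hinter E (subset_USet hn) hEm
  have h2E : P E' = ∑ k ∈ Finset.Icc 1 n, P (AkSet B c z k ∩ E') := by
    apply hinter E' _ hE'm
    refine subset_trans ?_ (subset_USet hn)
    intro ω hω
    simp only [hE', hE, mem_setOf_eq] at *
    linarith
  have hstep : ∀ k ∈ Finset.Icc 1 n, P (AkSet B c z k ∩ E')
      ≤ P (AkSet B c z k ∩ {ω | B (gr c n) ω ≤ z}) + gaussianReal 0 c.toNNReal (Ioi δ) := by
    intro k hk
    rw [Finset.mem_Icc] at hk
    exact step_b hB' hc hk.1 hk.2 hδ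
  have hsplit : ∀ k, P (AkSet B c z k)
      = P (AkSet B c z k ∩ E) + P (AkSet B c z k ∩ {ω | B (gr c n) ω ≤ z}) := by
    intro k
    have hset : AkSet B c z k ∩ {ω | B (gr c n) ω ≤ z} = AkSet B c z k \ E := by
      ext ω
      simp only [mem_diff, mem_inter_iff, hE, mem_setOf_eq, not_lt]
    rw [hset]
    exact (measure_inter_add_diff _ hEm).symm
  have hcard : (Finset.Icc 1 n).card = n := by
    rw [Nat.card_Icc]
    omega
  calc P E + P E'
      = ∑ k ∈ Finset.Icc 1 n, P (AkSet B c z k ∩ E)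
        + ∑ k ∈ Finset.Icc 1 n, P (AkSet B c z k ∩ E') := by rw [h1E, h2E]
    _ ≤ ∑ k ∈ Finset.Icc 1 n, P (AkSet B c z k ∩ E)
        + ∑ k ∈ Finset.Icc 1 n, (P (AkSet B c z k ∩ {ω | B (gr c n) ω ≤ z})
          + gaussianReal 0 c.toNNReal (Ioi δ)) :=
        add_le_add le_rfl (Finset.sum_le_sum hstep)
    _ = ∑ k ∈ Finset.Icc 1 n, (P (AkSet B c z k ∩ E)
          + P (AkSet B c z k ∩ {ω | B (gr c n) ω ≤ z}))
        + ∑ k ∈ Finset.Icc 1 n, gaussianReal 0 c.toNNReal (Ioi δ) := by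
        rw [Finset.sum_add_distrib, Finset.sum_add_distrib]
        ring
    _ = P (USet B c z n) + n * gaussianReal 0 c.toNNReal (Ioi δ) := by
        congr 1
        · rw [hsum]
          exact Finset.sum_congr rfl fun k _ => (hsplit k).symm
        · rw [Finset.sum_const, hcard, nsmul_eq_mul]


lemma USet_measurable (hm : ∀ t, Measurable (B t)) (c z : ℝ) (n : ℕ) :
    MeasurableSet (USet B c z n) := by
  have h : USet B c z n = ⋃ k ∈ Finset.Icc 1 n, {ω | z < B (gr c k) ω} := by
    ext ω
    simp only [USet, mem_setOf_eq, mem_iUnion, Finset.mem_Icc, exists_prop]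
    constructor
    · rintro ⟨k, h1, h2, h3⟩; exact ⟨k, ⟨h1, h2⟩, h3⟩
    · rintro ⟨k, ⟨h1, h2⟩, h3⟩; exact ⟨k, h1, h2, h3⟩
  rw [h]
  exact MeasurableSet.biUnion (Finset.countable_toSet _)
    fun k _ => (hm _) measurableSet_Ioi

lemma cast_two_pow (m : ℕ) : (((2^m : ℕ) : ℝ)) = (2:ℝ)^m := by push_cast; ring

lemma gr_last {t : ℝ} (m : ℕ) : gr (t/((2^m : ℕ) : ℝ)) (2^m) = t := by
  simp only [gr, cast_two_pow]
  field_simp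

lemma USet_mono (t z : ℝ) :
    Monotone (fun m : ℕ => USet B (t/((2^m : ℕ) : ℝ)) z (2^m)) := by
  apply monotone_nat_of_le_succ
  intro m ω hω
  obtain ⟨k, hk1, hkn, hzk⟩ := hω
  have hpow : 2^(m+1) = 2^m * 2 := pow_succ 2 m
  refine ⟨2*k, by omega, by omega, ?_⟩
  have hgr : gr (t/((2^(m+1) : ℕ) : ℝ)) (2*k) = gr (t/((2^m : ℕ) : ℝ)) k := by
    simp only [gr, cast_two_pow]
    have h2 : ((2:ℝ))^(m+1) = 2^m * 2 := pow_succ 2 m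
    rw [h2]
    push_cast
    have h3 : ((2:ℝ))^m ≠ 0 := by positivity
    field_simp
  rw [hgr]
  exact hzk

lemma sup_open_eq_iUnion (h0 : ∀ ω, B 0 ω = 0) (hcont : ∀ ω, Continuous fun s => B s ω)
    {t z : ℝ} (ht : 0 < t) (hz : 0 < z) :
    {ω | ∃ s, 0 ≤ s ∧ s ≤ t ∧ z < B s ω}
      = ⋃ m : ℕ, USet B (t / ((2^m : ℕ) : ℝ)) z (2^m) := by
  ext ω
  simp only [mem_setOf_eq, mem_iUnion]
  constructor
  · rintro ⟨s, hs0, hst, hzs⟩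
    have hs0' : 0 < s := by
      rcases eq_or_lt_of_le hs0 with h | h
      · exfalso; rw [← h, h0 ω] at hzs; linarith
      · exact h
    have hopen : IsOpen {r : ℝ | z < B r ω} := isOpen_lt continuous_const (hcont ω)
    obtain ⟨ε, hε, hball⟩ := Metric.isOpen_iff.mp hopen s hzs
    obtain ⟨m, hm⟩ := pow_unbounded_of_one_lt (t/ε) (one_lt_two (α := ℝ))
    have h2m : (0:ℝ) < (2:ℝ)^m := by positivity
    have hmesh : t / (2:ℝ)^m < ε := by
      rw [div_lt_iff₀ h2m]
      rw [div_lt_iff₀ hε] at hm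
      linarith [mul_comm ((2:ℝ)^m) ε]
    set k := ⌈s * (2:ℝ)^m / t⌉₊ with hkdef
    have hk1 : 1 ≤ k := Nat.one_le_iff_ne_zero.mpr (by
      simp only [hkdef, ne_eq, Nat.ceil_eq_zero, not_le]
      positivity)
    have hkn : k ≤ 2^m := by
      rw [hkdef]
      apply Nat.ceil_le.mpr
      rw [cast_two_pow m, div_le_iff₀ ht]
      nlinarith
    set g : ℝ := (k : ℝ) * (t / (2:ℝ)^m) with hgdef
    have hceil1 : s * (2:ℝ)^m / t ≤ (k : ℝ) := Nat.le_ceil _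
    have hceil2 : (k : ℝ) < s * (2:ℝ)^m / t + 1 := Nat.ceil_lt_add_one (by positivity)
    have hsg : s ≤ g := by
      rw [hgdef]
      have := mul_le_mul_of_nonneg_right hceil1 (le_of_lt (by positivity : (0:ℝ) < t / 2^m))
      calc s = (s * (2:ℝ)^m / t) * (t / 2^m) := by field_simp
        _ ≤ (k : ℝ) * (t / 2^m) := this
    have hgs : g < s + ε := by
      rw [hgdef]
      have := mul_lt_mul_of_pos_right hceil2 (by positivity : (0:ℝ) < t / 2^m)
      have heq : (s * (2:ℝ)^m / t) * (t / 2^m) = s := by field_simp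
      calc (k:ℝ) * (t / 2^m) < (s * (2:ℝ)^m / t + 1) * (t / 2^m) := this
        _ = s + t / 2^m := by rw [add_mul, heq, one_mul]
        _ < s + ε := by linarith
    have hgmem : g ∈ Metric.ball s ε := by
      rw [Metric.mem_ball, Real.dist_eq, abs_lt]
      constructor <;> linarith
    have hzg : z < B g ω := hball hgmem
    refine ⟨m, k, hk1, hkn, ?_⟩
    have : gr (t/((2^m : ℕ) : ℝ)) k = g := by
      simp only [gr, cast_two_pow, hgdef]
    rw [this]
    exact hzg
  · rintro ⟨m, k, hk1, hkn, hzk⟩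
    refine ⟨gr (t/((2^m : ℕ) : ℝ)) k, ?_, ?_, hzk⟩
    · simp only [gr, cast_two_pow]
      positivity
    · simp only [gr, cast_two_pow]
      have h2m : (0:ℝ) < (2:ℝ)^m := by positivity
      have hkc : (k:ℝ) ≤ (2:ℝ)^m := by
        rw [← cast_two_pow m]
        exact_mod_cast hkn
      calc (k:ℝ) * (t / 2^m) ≤ (2:ℝ)^m * (t / 2^m) :=
            mul_le_mul_of_nonneg_right hkc (by positivity)
        _ = t := by field_simp

theorem sup_open_formula (hB : IsStdBM P B) {t z : ℝ} (ht : 0 < t) (hz : 0 < z) :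
    P {ω | ∃ s, 0 ≤ s ∧ s ≤ t ∧ z < B s ω} = 2 * gaussianReal 0 t.toNNReal (Ioi z) := by
  obtain ⟨hP, hmeas, h0, hcont, hlaw, hind⟩ := hB
  have hB' : IsStdBM P B := ⟨hP, hmeas, h0, hcont, hlaw, hind⟩
  set G := gaussianReal 0 t.toNNReal with hG
  have hBt : ∀ w : ℝ, P {ω | w < B t ω} = G (Ioi w) := fun w =>
    B_law hB' ht.le measurableSet_Ioi
  set V : ℕ → Set Ω := fun m => USet B (t/((2^m : ℕ) : ℝ)) z (2^m) with hV
  have hceq : ∀ m : ℕ, (0:ℝ) < t/((2^m : ℕ) : ℝ) := fun m => by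
    rw [cast_two_pow]; positivity
  have htend : Tendsto (fun m => P (V m)) atTop (𝓝 (P {ω | ∃ s, 0 ≤ s ∧ s ≤ t ∧ z < B s ω})) := by
    have h := tendsto_measure_iUnion_atTop (μ := P) (USet_mono (B := B) t z)
    rw [← sup_open_eq_iUnion h0 hcont ht hz] at h
    exact h
  have hupper : P {ω | ∃ s, 0 ≤ s ∧ s ≤ t ∧ z < B s ω} ≤ 2 * G (Ioi z) := by
    apply le_of_tendsto htend
    filter_upwards with m
    have h := discrete_upper (n := 2^m) hB' (hceq m) Nat.one_le_two_pow hz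
    rw [gr_last m, hBt z] at h
    exact h
  have hlower : ∀ δ : ℝ, 0 < δ → G (Ioi z) + G (Ioi (z + 2*δ)) ≤
      P {ω | ∃ s, 0 ≤ s ∧ s ≤ t ∧ z < B s ω} := by
    intro δ hδ
    have h2 : Tendsto (fun m : ℕ => P (V m)
        + ((2^m : ℕ) : ℝ≥0∞) * gaussianReal 0 (t/((2^m : ℕ):ℝ)).toNNReal (Ioi δ)) atTop
        (𝓝 (P {ω | ∃ s, 0 ≤ s ∧ s ≤ t ∧ z < B s ω} + 0)) :=
      Tendsto.add htend (tendsto_n_mul_tail ht hδ)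
    rw [add_zero] at h2
    apply ge_of_tendsto h2
    filter_upwards with m
    have h := discrete_lower (n := 2^m) hB' (hceq m) Nat.one_le_two_pow hz hδ
    rw [gr_last m, hBt z, hBt (z + 2*δ)] at h
    convert h using 2
  have hδj : Tendsto (fun j : ℕ => G (Ioi z) + G (Ioi (z + 2 * (1/((j:ℝ)+1))))) atTop
      (𝓝 (G (Ioi z) + G (Ioi z))) := by
    apply Tendsto.add tendsto_const_nhds
    have hmono2 : Monotone (fun j : ℕ => Ioi (z + 2*(1/((j:ℝ)+1)))) := by
      intro a b hab
      apply Ioi_subset_Ioi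
      have h1 : (0:ℝ) < (a:ℝ)+1 := by positivity
      have h2 : ((a:ℝ)+1) ≤ ((b:ℝ)+1) := by
        have := Nat.cast_le (α := ℝ).mpr hab
        push_cast
        linarith [Nat.cast_le (α := ℝ) |>.mpr hab]
      have := one_div_le_one_div_of_le h1 h2
      linarith
    have h := tendsto_measure_iUnion_atTop (μ := G) hmono2
    have hun : (⋃ j : ℕ, Ioi (z + 2*(1/((j:ℝ)+1)))) = Ioi z := by
      ext x
      simp only [mem_iUnion, mem_Ioi]
      constructor
      · rintro ⟨j, hj⟩
        have : (0:ℝ) < 2*(1/((j:ℝ)+1)) := by positivity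
        linarith
      · intro hx
        obtain ⟨j, hj⟩ := exists_nat_one_div_lt (show (0:ℝ) < (x - z)/2 by linarith)
        refine ⟨j, ?_⟩
        have : (1:ℝ)/((j:ℝ)+1) < (x-z)/2 := hj
        linarith
    rw [hun] at h
    exact h
  have hfinal : G (Ioi z) + G (Ioi z) ≤ P {ω | ∃ s, 0 ≤ s ∧ s ≤ t ∧ z < B s ω} :=
    le_of_tendsto hδj (by
      filter_upwards with j
      exact hlower (1/((j:ℝ)+1)) (by positivity))
  refine le_antisymm hupper ?_
  rw [two_mul]
  exact hfinal

lemma openSup_measurable (hm : ∀ t, Measurable (B t)) (h0 : ∀ ω, B 0 ω = 0)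
    (hcont : ∀ ω, Continuous fun s => B s ω) {t z : ℝ} (ht : 0 < t) (hz : 0 < z) :
    MeasurableSet {ω | ∃ s, 0 ≤ s ∧ s ≤ t ∧ z < B s ω} := by
  rw [sup_open_eq_iUnion h0 hcont ht hz]
  exact MeasurableSet.iUnion fun m => USet_measurable hm _ _ _

lemma closedSup_eq_iInter (h0 : ∀ ω, B 0 ω = 0) (hcont : ∀ ω, Continuous fun s => B s ω)
    {t y : ℝ} (ht : 0 ≤ t) (N : ℕ) :
    {ω | ∃ s, 0 ≤ s ∧ s ≤ t ∧ y ≤ B s ω}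
      = ⋂ j : ℕ, {ω | ∃ s, 0 ≤ s ∧ s ≤ t ∧ (y - 1/((j:ℝ)+(N:ℝ)+1)) < B s ω} := by
  ext ω
  simp only [mem_iInter, mem_setOf_eq]
  constructor
  · rintro ⟨s, h1, h2, h3⟩ j
    have hpos : (0:ℝ) < 1/((j:ℝ)+(N:ℝ)+1) := by positivity
    exact ⟨s, h1, h2, by linarith⟩
  · intro hall
    obtain ⟨s₀, hs₀, hmax⟩ := isCompact_Icc.exists_isMaxOn (nonempty_Icc.mpr ht)
      ((hcont ω).continuousOn (s := Icc 0 t))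
    refine ⟨s₀, hs₀.1, hs₀.2, ?_⟩
    by_contra hcon
    push_neg at hcon
    obtain ⟨j, hj⟩ := exists_nat_one_div_lt (show 0 < y - B s₀ ω by linarith)
    obtain ⟨s, h1, h2, h3⟩ := hall j
    have hle : B s ω ≤ B s₀ ω := hmax (mem_Icc.mpr ⟨h1, h2⟩)
    have hcomp : (1:ℝ)/((j:ℝ)+(N:ℝ)+1) ≤ 1/((j:ℝ)+1) :=
      one_div_le_one_div_of_le (by positivity) (by
        have := Nat.cast_nonneg (α := ℝ) N
        linarith)
    linarith

lemma closedSup_measurable (hm : ∀ t, Measurable (B t)) (h0 : ∀ ω, B 0 ω = 0)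
    (hcont : ∀ ω, Continuous fun s => B s ω) {t y : ℝ} (ht : 0 < t) (hy : 0 < y) :
    MeasurableSet {ω | ∃ s, 0 ≤ s ∧ s ≤ t ∧ y ≤ B s ω} := by
  obtain ⟨N, hN⟩ := exists_nat_one_div_lt hy
  rw [closedSup_eq_iInter h0 hcont ht.le N]
  refine MeasurableSet.iInter fun j => openSup_measurable hm h0 hcont ht ?_
  have h1 : 1/((j:ℝ)+(N:ℝ)+1) ≤ 1/((N:ℝ)+1) := by
    apply one_div_le_one_div_of_le (by positivity)
    have := Nat.cast_nonneg (α := ℝ) j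
    linarith
  linarith

theorem sup_closed_formula (hB : IsStdBM P B) {t y : ℝ} (ht : 0 < t) (hy : 0 < y) :
    P {ω | ∃ s, 0 ≤ s ∧ s ≤ t ∧ y ≤ B s ω} = 2 * gaussianReal 0 t.toNNReal (Ici y) := by
  obtain ⟨hP, hmeas, h0, hcont, hlaw, hind⟩ := hB
  have hB' : IsStdBM P B := ⟨hP, hmeas, h0, hcont, hlaw, hind⟩
  obtain ⟨N, hN⟩ := exists_nat_one_div_lt hy
  set zj : ℕ → ℝ := fun j => y - 1/((j:ℝ) + (N:ℝ) + 1) with hzj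
  have hzjpos : ∀ j, 0 < zj j := by
    intro j
    have h1 : 1/((j:ℝ)+(N:ℝ)+1) ≤ 1/((N:ℝ)+1) := by
      apply one_div_le_one_div_of_le (by positivity)
      have := Nat.cast_nonneg (α := ℝ) j
      linarith
    simp only [hzj]
    linarith
  have hzjlt : ∀ j, zj j < y := fun j => by
    have : (0:ℝ) < 1/((j:ℝ)+(N:ℝ)+1) := by positivity
    simp only [hzj]
    linarith
  have hzjmono : Monotone zj := by
    intro a b hab
    simp only [hzj]
    have h2 : ((a:ℝ)+(N:ℝ)+1) ≤ ((b:ℝ)+(N:ℝ)+1) := by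
      have := Nat.cast_le (α := ℝ).mpr hab
      linarith
    have := one_div_le_one_div_of_le (by positivity : (0:ℝ) < (a:ℝ)+(N:ℝ)+1) h2
    linarith
  set W : ℕ → Set Ω := fun j => {ω | ∃ s, 0 ≤ s ∧ s ≤ t ∧ zj j < B s ω} with hW
  have hWm : ∀ j, MeasurableSet (W j) := fun j =>
    openSup_measurable hmeas h0 hcont ht (hzjpos j)
  have hWanti : Antitone W := by
    rintro a b hab ω ⟨s, h1, h2, h3⟩
    exact ⟨s, h1, h2, lt_of_le_of_lt (hzjmono hab) h3⟩
  have hiInter : (⋂ j, W j) = {ω | ∃ s, 0 ≤ s ∧ s ≤ t ∧ y ≤ B s ω} :=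
    (closedSup_eq_iInter h0 hcont ht.le N).symm
  have htendP : Tendsto (fun j => P (W j)) atTop (𝓝 (P (⋂ j, W j))) :=
    tendsto_measure_iInter_atTop (fun j => (hWm j).nullMeasurableSet) hWanti
      ⟨0, measure_ne_top _ _⟩
  have hPW : ∀ j, P (W j) = 2 * gaussianReal 0 t.toNNReal (Ioi (zj j)) := fun j =>
    sup_open_formula hB' ht (hzjpos j)
  have hGanti : Antitone (fun j : ℕ => Ioi (zj j)) := fun a b hab =>
    Ioi_subset_Ioi (hzjmono hab)
  have hGint : (⋂ j, Ioi (zj j)) = Ici y := by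
    ext x
    simp only [mem_iInter, mem_Ioi, mem_Ici]
    constructor
    · intro hall
      by_contra hcon
      push_neg at hcon
      obtain ⟨j, hj⟩ := exists_nat_one_div_lt (show 0 < y - x by linarith)
      have h1 : (1:ℝ)/((j:ℝ)+(N:ℝ)+1) ≤ 1/((j:ℝ)+1) :=
        one_div_le_one_div_of_le (by positivity) (by
          have := Nat.cast_nonneg (α := ℝ) N
          linarith)
      have := hall j
      simp only [hzj] at this
      linarith
    · intro hx j
      exact lt_of_lt_of_le (hzjlt j) hx
  have htendG : Tendsto (fun j => gaussianReal 0 t.toNNReal (Ioi (zj j))) atTop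
      (𝓝 (gaussianReal 0 t.toNNReal (Ici y))) := by
    have h := tendsto_measure_iInter_atTop (μ := gaussianReal 0 t.toNNReal)
      (fun j => measurableSet_Ioi.nullMeasurableSet) hGanti ⟨0, measure_ne_top _ _⟩
    rw [hGint] at h
    exact h
  have h2G : Tendsto (fun j => 2 * gaussianReal 0 t.toNNReal (Ioi (zj j))) atTop
      (𝓝 (2 * gaussianReal 0 t.toNNReal (Ici y))) :=
    ENNReal.Tendsto.const_mul htendG (Or.inr (by norm_num))
  have hfin : Tendsto (fun j => P (W j)) atTop
      (𝓝 (2 * gaussianReal 0 t.toNNReal (Ici y))) := by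
    refine h2G.congr fun j => ?_
    exact (hPW j).symm
  rw [← hiInter]
  exact tendsto_nhds_unique htendP hfin

theorem never_hit_null (hB : IsStdBM P B) {y : ℝ} (hy : 0 < y) :
    P {ω | ∀ s, 0 ≤ s → B s ω ≠ y} = 0 := by
  obtain ⟨hP, hmeas, h0, hcont, hlaw, hind⟩ := hB
  have hB' : IsStdBM P B := ⟨hP, hmeas, h0, hcont, hlaw, hind⟩
  set NN := {ω | ∀ s, 0 ≤ s → B s ω ≠ y} with hNN
  have hsub : ∀ u : ℝ, 0 < u → NN ⊆ {ω | ∃ s, 0 ≤ s ∧ s ≤ u ∧ y ≤ B s ω}ᶜ := by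
    intro u hu ω hω
    simp only [mem_compl_iff, mem_setOf_eq]
    rintro ⟨s, h1, h2, h3⟩
    have hy' : y ∈ Icc (B 0 ω) (B s ω) := by
      rw [h0 ω]
      exact ⟨hy.le, h3⟩
    obtain ⟨r, hr, hry⟩ := intermediate_value_Icc h1 ((hcont ω).continuousOn) hy'
    exact hω r hr.1 hry
  have hbound : ∀ j : ℕ, P NN ≤ 1 - 2 * gaussianReal 0 ((j:ℝ)+1).toNNReal (Ici y) := by
    intro j
    have hu : (0:ℝ) < (j:ℝ)+1 := by positivity
    have hHm := closedSup_measurable hmeas h0 hcont hu hy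
    calc P NN ≤ P {ω | ∃ s, 0 ≤ s ∧ s ≤ (j:ℝ)+1 ∧ y ≤ B s ω}ᶜ :=
          measure_mono (hsub _ hu)
      _ = 1 - P {ω | ∃ s, 0 ≤ s ∧ s ≤ (j:ℝ)+1 ∧ y ≤ B s ω} :=
          prob_compl_eq_one_sub hHm
      _ = 1 - 2 * gaussianReal 0 ((j:ℝ)+1).toNNReal (Ici y) := by
          rw [sup_closed_formula hB' hu hy]
  have htend : Tendsto (fun j : ℕ => 1 - 2 * gaussianReal 0 ((j:ℝ)+1).toNNReal (Ici y))
      atTop (𝓝 0) := by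
    have h1 := tendsto_gauss_Ici_half hy
    have h2 : Tendsto (fun j : ℕ => 2 * gaussianReal 0 ((j:ℝ)+1).toNNReal (Ici y)) atTop
        (𝓝 (2 * (1/2))) := ENNReal.Tendsto.const_mul h1 (Or.inr (by norm_num))
    have h3 : (2 : ℝ≥0∞) * (1/2) = 1 := by
      rw [one_div, ENNReal.mul_inv_cancel (by norm_num) (by norm_num)]
    rw [h3] at h2
    have h4 := ENNReal.Tendsto.sub (tendsto_const_nhds (x := (1:ℝ≥0∞))) h2
      (Or.inl (by norm_num))
    simpa using h4
  have : P NN ≤ 0 := ge_of_tendsto htend (Eventually.of_forall hbound)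
  exact le_antisymm this zero_le

end BMAux

open BMAux in
theorem hitting_time_cdf_aux {Ω : Type*} [MeasurableSpace Ω] (P : Measure Ω) (B : ℝ → Ω → ℝ)
    (hB : IsStdBM P B) (y : ℝ) (hy : 0 < y) :
    ∀ t : ℝ, 0 < t →
      P {ω | sInf {u : ℝ | 0 ≤ u ∧ B u ω = y} ≤ t}
        = ENNReal.ofReal (2 * stdNormalCDF (-y / Real.sqrt t)) := by
  intro t ht
  obtain ⟨hP, hmeas, h0, hcont, hlaw, hind⟩ := hB
  have hB' : IsStdBM P B := ⟨hP, hmeas, h0, hcont, hlaw, hind⟩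
  set H := {ω | ∃ s, 0 ≤ s ∧ s ≤ t ∧ y ≤ B s ω} with hH
  set NN := {ω | ∀ s, 0 ≤ s → B s ω ≠ y} with hNN
  have hset : {ω | sInf {u : ℝ | 0 ≤ u ∧ B u ω = y} ≤ t} = H ∪ NN := by
    ext ω
    simp only [mem_setOf_eq, mem_union, hH, hNN]
    constructor
    · intro hle
      by_cases hne : {u : ℝ | 0 ≤ u ∧ B u ω = y}.Nonempty
      · left
        have hcl : IsClosed {u : ℝ | 0 ≤ u ∧ B u ω = y} := by
          have heq : {u : ℝ | 0 ≤ u ∧ B u ω = y} = Ici 0 ∩ (fun u => B u ω) ⁻¹' {y} := by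
            ext u
            simp [mem_Ici]
          rw [heq]
          exact isClosed_Ici.inter (isClosed_singleton.preimage (hcont ω))
        have hbdd : BddBelow {u : ℝ | 0 ≤ u ∧ B u ω = y} := ⟨0, fun x hx => hx.1⟩
        have hmem := hcl.csInf_mem hne hbdd
        exact ⟨sInf {u : ℝ | 0 ≤ u ∧ B u ω = y}, hmem.1, hle, hmem.2.ge⟩
      · right
        intro s hs hcon
        exact hne ⟨s, hs, hcon⟩
    · rintro (⟨s, h1, h2, h3⟩ | hNo)
      · have hy' : y ∈ Icc (B 0 ω) (B s ω) := by
          rw [h0 ω]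
          exact ⟨hy.le, h3⟩
        obtain ⟨r, hr, hry⟩ := intermediate_value_Icc h1 ((hcont ω).continuousOn) hy'
        have hle : sInf {u : ℝ | 0 ≤ u ∧ B u ω = y} ≤ r :=
          csInf_le ⟨0, fun x hx => hx.1⟩ ⟨hr.1, hry⟩
        linarith [hr.2]
      · have hempty : {u : ℝ | 0 ≤ u ∧ B u ω = y} = ∅ := by
          ext u
          simp only [mem_setOf_eq, mem_empty_iff_false, iff_false, not_and]
          exact fun hu => hNo u hu
        rw [hempty, Real.sInf_empty]
        exact ht.le
  have hPN : P NN = 0 := never_hit_null hB' hy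
  have hPH : P ({ω | sInf {u : ℝ | 0 ≤ u ∧ B u ω = y} ≤ t}) = P H := by
    rw [hset]
    refine le_antisymm ((measure_union_le _ _).trans ?_) (measure_mono subset_union_left)
    rw [hPN, add_zero]
  rw [hPH, sup_closed_formula hB' ht hy, gauss_Ici_eq_CDF ht y]
  rw [show (2:ℝ≥0∞) = ENNReal.ofReal (2:ℝ) by norm_num]
  rw [← ENNReal.ofReal_mul (by norm_num)]

theorem hitting_time_cdf {Ω : Type*} [MeasurableSpace Ω] (P : Measure Ω) (B : ℝ → Ω → ℝ)
    (hB : IsStdBM P B) (y : ℝ) (hy : 0 < y) :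
    ∀ t : ℝ, 0 < t →
      P {ω | hitTime B y ω ≤ t} = ENNReal.ofReal (2 * stdNormalCDF (-y / Real.sqrt t)) := by
  intro t ht
  exact hitting_time_cdf_aux P B hB y hy t ht
end
end

section
/- As $y \to 0^+$, the conditional close density $p(c \mid h \leq y) = \frac{1}{\sqrt{2\pi}} e^{-c^2/2}\,\frac{1 - e^{-2y(y-c)}}{1 - 2\Phi(-y)}\mathbb{1}_{\{c<y\}}$ converges pointwise for each $c < 0$ to $-c\,e^{-c^2/2}$ (the negated Rayleigh density), and to $0$ for each $c > 0$. -/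
noncomputable section
open MeasureTheory Real Filter Topology

/-- Conditional density of the close given the high stayed below `y`. -/
def condCloseDensity (y c : ℝ) : ℝ :=
  if c < y then
    1 / Real.sqrt (2 * Real.pi) * Real.exp (-c ^ 2 / 2) *
      ((1 - Real.exp (-2 * y * (y - c))) / (1 - 2 * stdNormalCDF (-y)))
  else 0

lemma gexp_integrable : Integrable (fun t : ℝ => Real.exp (-t ^ 2 / 2)) := by
  have h : Integrable (fun t : ℝ => Real.exp (-(1/2 : ℝ) * t ^ 2)) := by
    simpa using integrable_exp_neg_mul_sq (by norm_num : (0:ℝ) < 1/2)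
  refine h.congr ?_
  filter_upwards with t
  ring_nf

lemma phi_integrable :
    Integrable (fun t : ℝ => 1 / Real.sqrt (2 * Real.pi) * Real.exp (-t ^ 2 / 2)) :=
  gexp_integrable.const_mul _

lemma phi_continuous :
    Continuous (fun t : ℝ => 1 / Real.sqrt (2 * Real.pi) * Real.exp (-t ^ 2 / 2)) := by
  fun_prop

lemma stdNormalCDF_eq (x : ℝ) :
    stdNormalCDF x = stdNormalCDF 0 +
      ∫ t in (0:ℝ)..x, 1 / Real.sqrt (2 * Real.pi) * Real.exp (-t ^ 2 / 2) := by
  have := intervalIntegral.integral_Iic_sub_Iic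
    (phi_integrable.integrableOn (s := Set.Iic 0))
    (phi_integrable.integrableOn (s := Set.Iic x))
  unfold stdNormalCDF
  linarith [this]

lemma stdNormalCDF_hasDerivAt (x : ℝ) :
    HasDerivAt stdNormalCDF (1 / Real.sqrt (2 * Real.pi) * Real.exp (-x ^ 2 / 2)) x := by
  have h := ((phi_continuous.integral_hasStrictDerivAt 0 x).hasDerivAt).const_add
    (stdNormalCDF 0)
  refine h.congr_of_eventuallyEq ?_
  filter_upwards with y
  exact stdNormalCDF_eq y

lemma stdNormalCDF_zero : stdNormalCDF 0 = 1 / 2 := by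
  have hg : (∫ t : ℝ, Real.exp (-t ^ 2 / 2)) = Real.sqrt (2 * Real.pi) := by
    have h := integral_gaussian (1/2 : ℝ)
    rw [show (fun t : ℝ => Real.exp (-t ^ 2 / 2)) = fun t : ℝ => Real.exp (-(1/2) * t^2) by
      funext t; ring_nf] at *
    rw [h]
    rw [show (2:ℝ) * π = π / (1/2) by ring]
  have heven : ∀ t : ℝ, Real.exp (-(-t) ^ 2 / 2) = Real.exp (-t ^ 2 / 2) := by
    intro t; ring_nf
  have hIic : (∫ t in Set.Iic (0:ℝ), Real.exp (-t ^ 2 / 2))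
      = ∫ t in Set.Ioi (0:ℝ), Real.exp (-t ^ 2 / 2) := by
    have h := integral_comp_neg_Iic (0:ℝ) (fun t => Real.exp (-t ^ 2 / 2))
    simp only [heven, neg_zero] at h
    exact h
  have hadd := intervalIntegral.integral_Iic_add_Ioi (b := (0:ℝ))
    (gexp_integrable.integrableOn) (gexp_integrable.integrableOn)
  unfold stdNormalCDF
  rw [integral_const_mul]
  have : (∫ t in Set.Iic (0:ℝ), Real.exp (-t ^ 2 / 2)) = Real.sqrt (2 * Real.pi) / 2 := by
    rw [hg] at hadd; linarith [hIic, hadd]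
  rw [this]
  have hs : Real.sqrt (2 * Real.pi) ≠ 0 := by positivity
  field_simp

theorem cond_close_density_limit :
    (∀ c : ℝ, c < 0 →
      Tendsto (fun y => condCloseDensity y c) (nhdsWithin 0 (Set.Ioi 0))
        (nhds (-c * Real.exp (-c ^ 2 / 2)))) ∧
    (∀ c : ℝ, 0 < c →
      Tendsto (fun y => condCloseDensity y c) (nhdsWithin 0 (Set.Ioi 0)) (nhds 0)) := by
  have hsle : nhdsWithin (0:ℝ) (Set.Ioi 0) ≤ nhdsWithin (0:ℝ) {(0:ℝ)}ᶜ :=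
    nhdsWithin_mono 0 (fun y hy => ne_of_gt hy)
  constructor
  · intro c hc
    set s : ℝ := Real.sqrt (2 * Real.pi) with hs
    have hs_pos : 0 < s := Real.sqrt_pos.mpr (by positivity)
    set N : ℝ → ℝ := fun y => 1 - Real.exp (-2 * y * (y - c)) with hNdef
    set D : ℝ → ℝ := fun y => 1 - 2 * stdNormalCDF (-y) with hDdef
    have hN0 : N 0 = 0 := by simp [hNdef]
    have hD0 : D 0 = 0 := by simp [hDdef, stdNormalCDF_zero]
    have hN : HasDerivAt N (-(2 * c)) 0 := by
      have hu : HasDerivAt (fun y : ℝ => -2 * y * (y - c)) (2 * c) 0 := by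
        have h1 : HasDerivAt (fun y : ℝ => y) 1 0 := hasDerivAt_id 0
        have h2 := (h1.mul (h1.sub_const c)).const_mul (-2 : ℝ)
        convert h2 using 1
        · rfl
        · rfl
        · funext y; simp only [Pi.mul_apply]; ring
        · norm_num
      have h3 := (hu.exp).const_sub 1
      convert h3 using 1
      · rfl
      · rfl
      simp
    have hD : HasDerivAt D (2 / s) 0 := by
      have h1 : HasDerivAt (fun y : ℝ => stdNormalCDF (-y)) (-(1 / s)) 0 := by
        have h0 := (stdNormalCDF_hasDerivAt (-0 : ℝ)).comp 0 ((hasDerivAt_id (0:ℝ)).neg)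
        convert h0 using 1
        · rfl
        · rfl
        · rfl
        simp [hs]
      have h2 := (h1.const_mul 2).const_sub 1
      convert h2 using 1
      · rfl
      · rfl
      field_simp
    have hslopeN : Tendsto (fun y => N y / y) (nhdsWithin 0 (Set.Ioi 0)) (𝓝 (-(2 * c))) := by
      have := (hasDerivAt_iff_tendsto_slope.mp hN).mono_left hsle
      refine this.congr (fun y => ?_)
      simp [slope_def_field, hN0]
    have hslopeD : Tendsto (fun y => D y / y) (nhdsWithin 0 (Set.Ioi 0)) (𝓝 (2 / s)) := by
      have := (hasDerivAt_iff_tendsto_slope.mp hD).mono_left hsle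
      refine this.congr (fun y => ?_)
      simp [slope_def_field, hD0]
    have hratio : Tendsto (fun y => N y / D y) (nhdsWithin 0 (Set.Ioi 0))
        (𝓝 ((-(2 * c)) / (2 / s))) := by
      have h := hslopeN.div hslopeD (by positivity)
      refine h.congr' ?_
      filter_upwards [self_mem_nhdsWithin] with y (hy : 0 < y)
      simp only [Pi.div_apply]
      rw [div_div_div_cancel_right₀ (ne_of_gt hy) (N y) (D y)]
    have hmain := hratio.const_mul (1 / s * Real.exp (-c ^ 2 / 2))
    have hlim : 1 / s * Real.exp (-c ^ 2 / 2) * ((-(2 * c)) / (2 / s))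
        = -c * Real.exp (-c ^ 2 / 2) := by
      field_simp
    rw [hlim] at hmain
    refine hmain.congr' ?_
    filter_upwards [self_mem_nhdsWithin] with y (hy : 0 < y)
    have hcy : c < y := lt_trans hc hy
    simp only [condCloseDensity, if_pos hcy, hNdef, hDdef, hs]
  · intro c hc
    have hev : ∀ᶠ y in nhdsWithin (0:ℝ) (Set.Ioi 0), condCloseDensity y c = 0 := by
      filter_upwards [Ioo_mem_nhdsGT_of_mem (Set.mem_Ico.mpr ⟨le_refl (0:ℝ), hc⟩)] with y hy
      simp [condCloseDensity, not_lt.mpr (le_of_lt hy.2)]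
    exact Tendsto.congr' (EventuallyEq.symm hev) tendsto_const_nhds
end
end
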